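/- Let X be a set, U : X → 2^X a perturbation type, and H a class of hypotheses X → {0,1} of finite VC-dimension d. Suppose: (a) H admits a proper (non-robust) sample compression scheme of size k(n) = O(d·log n): there is a decoder φ such that for every h ∈ H and every finite sequence T of at most n points labeled by h, there is a subsequence K of T of length at most k(n) with φ(K) ∈ H and φ(K) agreeing with h on all of T; and (b) (H, U) has a perfect, proper, non-adaptive, efficient per-point adversary with budget C: a map Q : X → Finset X with Q(x) ⊆ U(x) and |Q(x)| ≤ C for all x, and a map Att such that for every h ∈ H and x ∈ X, Att(x, h|_{Q(x) ∪ {x}}) returns an adversarial point of x with respect to h whenever one exists (i.e., some z ∈ U(x) with h(z) ≠ h(x)) and returns none otherwise, with the returned point lying in Q(x). Then (H, U) admits a robust proper compression scheme with O(1) bits of side information per compressed point and total size O(d·log m) on samples of size m: there exist B ∈ ℕ depending only on C and decoders ψ_m : (X×{0,1})^{k'} × {0,1}^{B·k'} → H with k' = O(d·log m), such that for every h ∈ H and every finite S_X ⊆ X with |S_X| = m, there exist a k'-tuple K of pairs (x, h(x)) with x ∈ S_X and a bit string b ∈ {0,1}^{B·k'} with ℓ^U(h, x, h(x)) = ℓ^U(ψ_m(K,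 b), x, h(x)) for all x ∈ S_X. -/

import Mathlib

open MeasureTheory Set
open scoped ENNReal symmDiff

namespace AdvRobust

variable {X : Type*}

/-- Error region of a hypothesis `h : X → Bool`, as a subset of `X × Bool`. -/
def errSet (h : X → Bool) : Set (X × Bool) := {p | h p.1 ≠ p.2}

/-- Margin area of a hypothesis w.r.t. perturbation type `U`, as a subset of `X × Bool`. -/
def marSet (U : X → Set X) (h : X → Bool) : Set (X × Bool) :=
  {p | ∃ z ∈ U p.1, h z ≠ h p.1}

/-- Margin area of a hypothesis, identified with a subset of the domain `X`. -/
def marSetX (U : X → Set X) (h : X → Bool) : Set X :=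
  {x | ∃ z ∈ U x, h z ≠ h x}

/-- Robust loss `L^U_P(h) = P(err(h) ∪ mar_U(h))`. -/
noncomputable def robustLoss [MeasurableSpace X] (U : X → Set X)
    (P : Measure (X × Bool)) (h : X → Bool) : ℝ≥0∞ :=
  P (errSet h ∪ marSet U h)

/-- Binary (0/1) loss `L^{0/1}_P(h) = P(err(h))`. -/
noncomputable def binLoss [MeasurableSpace X]
    (P : Measure (X × Bool)) (h : X → Bool) : ℝ≥0∞ :=
  P (errSet h)

/-- Robust loss via the pointwise robust loss set `{(x,y) | ∃ z ∈ U x, h z ≠ y}`. -/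
noncomputable def robustLoss' [MeasurableSpace X] (U : X → Set X)
    (P : Measure (X × Bool)) (h : X → Bool) : ℝ≥0∞ :=
  P {p : X × Bool | ∃ z ∈ U p.1, h z ≠ p.2}

/-- A family of sets `G` shatters a finite set `B`. -/
def Shatters {Z : Type*} (G : Set (Set Z)) (B : Finset Z) : Prop :=
  ∀ F ⊆ B, ∃ g ∈ G, ∀ z ∈ B, (z ∈ g ↔ z ∈ F)

/-- The VC-dimension of `G` is at most `d`. -/
def VCdimLE {Z : Type*} (G : Set (Set Z)) (d : ℕ) : Prop :=
  ∀ B : Finset Z, Shatters G B → B.card ≤ d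

/-- The VC-dimension of `G` equals `d`. -/
def VCdimEq {Z : Type*} (G : Set (Set Z)) (d : ℕ) : Prop :=
  VCdimLE G d ∧ ∃ B : Finset Z, Shatters G B ∧ B.card = d

/-- The family `{h⁻¹(1) : h ∈ H}` associated with a class of Boolean hypotheses. -/
def classSets (H : Set (X → Bool)) : Set (Set X) := (fun h => h ⁻¹' {true}) '' H

/-- The margin class `{mar_U(h) : h ∈ H}`. -/
def marginClass (U : X → Set X) (H : Set (X → Bool)) : Set (Set (X × Bool)) :=
  (marSet U) '' H


/-! ### Auxiliary definitions for the robust compression scheme -/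

/-- Decode a point from an anchor `x` and a side-information index `j`:
`j = 0` means the point `x` itself, `j ≥ 1` means the `(j-1)`-st point of `Q x`. -/
noncomputable def decPt {X : Type*} (Q : X → Finset X) (x : X) (j : ℕ) : X :=
  if j = 0 then x else (Q x).toList.getD (j - 1) x

/-- Extract the `r`-th side-information bit of slot `i` from a flat bit string. -/
def bitAtDef (C k : ℕ) (bits : Fin ((C + 3) * k) → Bool) (i r : ℕ) : Bool :=
  if hp : (C + 3) * i + r < (C + 3) * k then bits ⟨_, hp⟩ else false

/-- Decode slot `i` into an optional labeled point. -/
noncomputable def slotDef {X : Type*} (Q : X → Finset X) (C k : ℕ)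
    (K : Fin k → X × Bool) (bits : Fin ((C + 3) * k) → Bool) (i : Fin k) :
    Option (X × Bool) :=
  if bitAtDef C k bits i 0 = true then
    some (decPt Q (K i).1
      (((Finset.range (C + 1)).filter (fun r => bitAtDef C k bits i (2 + r) = true)).card),
      bitAtDef C k bits i 1)
  else none

open Classical in
/-- The robust decoder built from a non-robust decoder `φ`, a default hypothesis `h0`,
and the query sets `Q`. -/
noncomputable def psiAux {X : Type*} (φ : List (X × Bool) → (X → Bool)) (H : Set (X → Bool))
    (h0 : X → Bool) (Q : X → Finset X) (C : ℕ) (k : ℕ)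
    (K : Fin k → X × Bool) (bits : Fin ((C + 3) * k) → Bool) : X → Bool :=
  if φ (List.ofFn (slotDef Q C k K bits)).reduceOption ∈ H then
    φ (List.ofFn (slotDef Q C k K bits)).reduceOption
  else h0

lemma psiAux_mem {X : Type*} (φ : List (X × Bool) → (X → Bool)) (H : Set (X → Bool))
    (h0 : X → Bool) (h0H : h0 ∈ H) (Q : X → Finset X) (C k : ℕ)
    (K : Fin k → X × Bool) (bits : Fin ((C + 3) * k) → Bool) :
    psiAux φ H h0 Q C k K bits ∈ H := by
  rw [psiAux]
  split
  · assumption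
  · exact h0H

lemma bitAtDef_eq {C k : ℕ} (F : ℕ → ℕ → Bool) (i r : ℕ) (hi : i < k) (hr : r < C + 3) :
    bitAtDef C k (fun p => F ((p : ℕ) / (C + 3)) ((p : ℕ) % (C + 3))) i r = F i r := by
  have h1 : (C + 3) * i + (C + 3) ≤ (C + 3) * k := by
    rw [← Nat.mul_succ]
    exact Nat.mul_le_mul_left _ hi
  have hp : (C + 3) * i + r < (C + 3) * k := by omega
  rw [bitAtDef, dif_pos hp]
  simp only [Nat.mul_add_div (by omega : (C + 3) > 0), Nat.mul_add_mod,
    Nat.div_eq_of_lt hr, Nat.mod_eq_of_lt hr, Nat.add_zero]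

lemma reduceOption_ofFn_getElem? {α : Type*} (l : List α) (n : ℕ) (hn : l.length ≤ n) :
    (List.ofFn fun i : Fin n => l[(i : ℕ)]?).reduceOption = l := by
  induction n generalizing l with
  | zero =>
    have hl : l = [] := List.length_eq_zero_iff.mp (Nat.le_zero.mp hn)
    simp [hl]
  | succ n ih =>
    cases l with
    | nil =>
      have h1 : (List.ofFn fun i : Fin (n + 1) => (([] : List α))[(i : ℕ)]?)
          = List.replicate (n + 1) (none : Option α) := by
        rw [show (fun i : Fin (n + 1) => (([] : List α))[(i : ℕ)]?)
            = fun _ => (none : Option α) from funext fun i => by simp]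
        exact List.ofFn_const _ _
      rw [h1]
      clear ih hn
      induction (n + 1) with
      | zero => simp
      | succ k ihk =>
        rw [List.replicate_succ, List.reduceOption_cons_of_none, ihk]
    | cons a l =>
      rw [List.ofFn_succ]
      simp only [Fin.val_zero, List.getElem?_cons_zero, Fin.val_succ, List.getElem?_cons_succ]
      rw [List.reduceOption_cons_of_some, ih l (by simpa using hn)]

lemma filter_lt_card (j n : ℕ) (hj : j ≤ n) :
    ((Finset.range n).filter (fun r => r < j)).card = j := by
  have : (Finset.range n).filter (fun r => r < j) = Finset.range j := by
    ext r
    simp only [Finset.mem_filter, Finset.mem_range]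
    omega
  rw [this, Finset.card_range]

/-- If `H` (of VC-dimension `d`) admits a proper sample compression
scheme of size `k(n) = O(d·log n)`, and `(H, U)` has a perfect, proper, non-adaptive,
efficient per-point adversary with budget `C` (query sets `Q x ⊆ U x`, `|Q x| ≤ C`, and an
attack map `Att` depending on `h` only through the labels on `Q x ∪ {x}` that returns an
adversarial point in `Q x` whenever one exists and `none` otherwise), then `(H, U)` admits
a robust proper compression scheme of size `k' = O(d·log m)` with `O(1)` bits of side
information per compressed point. -/
theorem statement14 {X : Type*} (U : X → Set X) (hU : ∀ x, x ∈ U x)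
    (H : Set (X → Bool)) (d : ℕ) (hVC : VCdimEq (classSets H) d)
    -- (a) proper (non-robust) sample compression of size `k(n) = O(d log n)`
    (ca : ℝ) (hca : 0 < ca) (kk : ℕ → ℕ)
    (hkk : ∀ n : ℕ, (kk n : ℝ) ≤ ca * ((d : ℝ) * Real.log (n : ℝ) + 1))
    (φ : List (X × Bool) → (X → Bool))
    (hcomp : ∀ h ∈ H, ∀ T : List X,
        ∃ K : List (X × Bool),
          K.Sublist (T.map fun x => (x, h x)) ∧ K.length ≤ kk T.length ∧
          φ K ∈ H ∧ ∀ x ∈ T, φ K x = h x)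
    -- (b) perfect, proper, non-adaptive, efficient per-point adversary with budget `C`
    (C : ℕ) (Q : X → Finset X)
    (hQsub : ∀ x : X, (Q x : Set X) ⊆ U x) (hQcard : ∀ x : X, (Q x).card ≤ C)
    (Att : (x : X) → ({z : X // z = x ∨ z ∈ Q x} → Bool) → Option X)
    (hAtt : ∀ h ∈ H, ∀ x : X,
        (∀ x' : X, Att x (fun z => h z.1) = some x' →
            x' ∈ Q x ∧ x' ∈ U x ∧ h x' ≠ h x) ∧
        ((∃ z ∈ U x, h z ≠ h x) → ∃ x' : X, Att x (fun z => h z.1) = some x')) :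
    ∃ (B : ℕ) (c' : ℝ), 0 < c' ∧
      ∃ k' : ℕ → ℕ,
        (∀ m : ℕ, (k' m : ℝ) ≤ c' * ((d : ℝ) * Real.log (m : ℝ) + 1)) ∧
        ∃ ψ : (m : ℕ) → (Fin (k' m) → X × Bool) → (Fin (B * k' m) → Bool) → (X → Bool),
          (∀ m K bits, ψ m K bits ∈ H) ∧
          ∀ m : ℕ, ∀ h ∈ H, ∀ SX : Finset X, SX.card = m →
            ∃ K : Fin (k' m) → X × Bool,
              (∀ i, (K i).1 ∈ SX ∧ (K i).2 = h (K i).1) ∧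
              ∃ bits : Fin (B * k' m) → Bool,
                ∀ x ∈ SX,
                  ((∃ z ∈ U x, h z ≠ h x) ↔ (∃ z ∈ U x, ψ m K bits z ≠ h x)) := by
  classical
  -- `H` is nonempty
  obtain ⟨-, Bs, hSh, -⟩ := hVC
  obtain ⟨g0, hg0, -⟩ := hSh ∅ (Finset.empty_subset _)
  obtain ⟨h0, h0H, -⟩ := hg0
  have hlogC : (0 : ℝ) ≤ Real.log ((C : ℝ) + 1) := Real.log_nonneg (by have h0C : (0:ℝ) ≤ (C:ℝ) := Nat.cast_nonneg C; linarith)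
  have hd : (0 : ℝ) ≤ (d : ℝ) := Nat.cast_nonneg d
  have hc'pos : 0 < ca * ((d : ℝ) * Real.log ((C : ℝ) + 1) + 1) := by
    have h1 : (0 : ℝ) ≤ (d : ℝ) * Real.log ((C : ℝ) + 1) := mul_nonneg hd hlogC
    nlinarith
  refine ⟨C + 3, ca * ((d : ℝ) * Real.log ((C : ℝ) + 1) + 1), hc'pos,
    (fun m => if m = 0 then 0 else kk (m * (C + 1))), ?_,
    (fun m => psiAux φ H h0 Q C (if m = 0 then 0 else kk (m * (C + 1)))), ?_, ?_⟩
  · -- size bound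
    intro m
    beta_reduce
    rcases Nat.eq_zero_or_pos m with hm | hm
    · subst hm
      simpa [Real.log_zero] using hc'pos.le
    · rw [if_neg (Nat.pos_iff_ne_zero.mp hm)]
      have h1 := hkk (m * (C + 1))
      have hm1 : (1 : ℝ) ≤ (m : ℝ) := by exact_mod_cast hm
      have hlogm : (0 : ℝ) ≤ Real.log (m : ℝ) := Real.log_nonneg hm1
      have hcast : ((m * (C + 1) : ℕ) : ℝ) = (m : ℝ) * ((C : ℝ) + 1) := by push_cast; ring
      have hlmul : Real.log ((m : ℝ) * ((C : ℝ) + 1)) =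
          Real.log (m : ℝ) + Real.log ((C : ℝ) + 1) :=
        Real.log_mul (ne_of_gt (by linarith)) (ne_of_gt (by positivity))
      rw [hcast, hlmul] at h1
      nlinarith [mul_nonneg (mul_nonneg hd hlogC) (mul_nonneg hd hlogm), hca.le]
  · -- properness
    intro m K bits
    exact psiAux_mem φ H h0 h0H Q C _ K bits
  · -- main compression property
    intro m f hf SX hSX
    beta_reduce
    rcases Nat.eq_zero_or_pos m with hm | hmpos
    · -- trivial case `m = 0`
      subst hm
      have hSXe : SX = ∅ := Finset.card_eq_zero.mp hSX
      refine ⟨fun i => absurd i.2 (by simp), fun i => absurd i.2 (by simp),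
        fun p => absurd p.2 (by simp), ?_⟩
      intro x hx
      rw [hSXe] at hx
      exact absurd hx (Finset.notMem_empty x)
    have hm : m ≠ 0 := Nat.pos_iff_ne_zero.mp hmpos
    obtain ⟨x0, hx0⟩ := Finset.card_pos.mp (hSX ▸ hmpos)
    -- the augmented sample
    set T : List X :=
      SX.toList.flatMap
        (fun x => (x :: (Q x).toList) ++ List.replicate (C - (Q x).card) x) with hT
    have hTlen : T.length = m * (C + 1) := by
      rw [hT, List.length_flatMap]
      have hlb : ∀ x ∈ SX.toList,
          (List.length ∘ fun x => (x :: (Q x).toList) ++ List.replicate (C - (Q x).card) x) x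
            = C + 1 := by
        intro x hx
        have := hQcard x
        simp only [Function.comp_apply, List.length_append, List.length_cons,
          Finset.length_toList, List.length_replicate]
        omega
      erw [List.map_congr_left hlb]
      rw [List.map_const', List.sum_replicate, smul_eq_mul,
        Finset.length_toList, hSX]
    have hmemT1 : ∀ x ∈ SX, x ∈ T := by
      intro x hx
      rw [hT]
      exact List.mem_flatMap.mpr ⟨x, Finset.mem_toList.mpr hx, by simp⟩
    have hmemT2 : ∀ x ∈ SX, ∀ z ∈ Q x, z ∈ T := by
      intro x hx z hz
      rw [hT]
      exact List.mem_flatMap.mpr ⟨x, Finset.mem_toList.mpr hx, by simp [hz]⟩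
    have hmemT3 : ∀ t ∈ T, ∃ x ∈ SX, t = x ∨ t ∈ Q x := by
      intro t ht
      rw [hT] at ht
      obtain ⟨x, hx, hblk⟩ := List.mem_flatMap.mp ht
      refine ⟨x, Finset.mem_toList.mp hx, ?_⟩
      simp only [List.mem_append, List.mem_cons, Finset.mem_toList, List.mem_replicate] at hblk
      rcases hblk with (h1 | h1) | h1
      · exact Or.inl h1
      · exact Or.inr h1
      · exact Or.inl h1.2
    -- apply the non-robust compression scheme
    obtain ⟨K0, hK0sub, hK0len, hφH, hagree⟩ := hcomp f hf T
    rw [hTlen] at hK0len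
    -- select anchors and indices for compressed points
    have hsel : ∀ i : Fin K0.length, ∃ x, x ∈ SX ∧ ∃ j, j < C + 1 ∧
        decPt Q x j = (K0.get i).1 ∧ (K0.get i).2 = f (K0.get i).1 := by
      intro i
      have hmem : K0.get i ∈ T.map (fun x => (x, f x)) :=
        hK0sub.subset (List.get_mem K0 i)
      obtain ⟨t, htT, hpair⟩ := List.mem_map.mp hmem
      obtain ⟨x, hxS, hcase⟩ := hmemT3 t htT
      have ht1 : (K0.get i).1 = t := by rw [← hpair]
      have ht2 : (K0.get i).2 = f (K0.get i).1 := by rw [← hpair]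
      rcases hcase with hc | hc
      · exact ⟨x, hxS, 0, by omega, by rw [decPt, if_pos rfl, ht1, hc], ht2⟩
      · obtain ⟨⟨idx, hidx⟩, hget⟩ := List.mem_iff_get.mp (Finset.mem_toList.mpr hc)
        refine ⟨x, hxS, idx + 1, ?_, ?_, ht2⟩
        · have h3 : (Q x).toList.length = (Q x).card := Finset.length_toList _
          have := hQcard x
          omega
        · rw [decPt, if_neg (by omega), Nat.add_sub_cancel,
            List.getD_eq_getElem _ _ hidx, ht1]
          exact hget
    choose xsel hxsel jsel hjlt hjdec hlab using hsel
    -- the compressed sequence and the side-information bits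
    set k1 : ℕ := if m = 0 then 0 else kk (m * (C + 1)) with hk1
    have hk1' : k1 = kk (m * (C + 1)) := by rw [hk1, if_neg hm]
    rw [← hk1'] at hK0len
    set K : Fin k1 → X × Bool := fun i =>
      if hi : (i : ℕ) < K0.length then (xsel ⟨i, hi⟩, f (xsel ⟨i, hi⟩)) else (x0, f x0)
      with hK
    set F : ℕ → ℕ → Bool := fun i r =>
      if hi : i < K0.length then
        (if r = 0 then true else if r = 1 then (K0.get ⟨i, hi⟩).2
         else decide (r - 2 < jsel ⟨i, hi⟩))
      else false
      with hF
    set bits : Fin ((C + 3) * k1) → Bool :=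
      fun p => F ((p : ℕ) / (C + 3)) ((p : ℕ) % (C + 3)) with hbits
    -- the slots decode exactly to `K0`
    have hslot : ∀ i : Fin k1, slotDef Q C k1 K bits i = K0[(i : ℕ)]? := by
      intro i
      have hbit : ∀ r : ℕ, r < C + 3 → bitAtDef C k1 bits (i : ℕ) r = F (i : ℕ) r := by
        intro r hr
        rw [hbits]
        exact bitAtDef_eq F (i : ℕ) r i.2 hr
      by_cases hi : (i : ℕ) < K0.length
      · have e0 : bitAtDef C k1 bits (i : ℕ) 0 = true := by
          rw [hbit 0 (by omega), hF]
          simp [hi]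
        have e1 : bitAtDef C k1 bits (i : ℕ) 1 = (K0.get ⟨(i : ℕ), hi⟩).2 := by
          rw [hbit 1 (by omega), hF]
          simp [hi]
        have ecard : ((Finset.range (C + 1)).filter
            (fun r => bitAtDef C k1 bits (i : ℕ) (2 + r) = true)).card
              = jsel ⟨(i : ℕ), hi⟩ := by
          have hcongr : (Finset.range (C + 1)).filter
              (fun r => bitAtDef C k1 bits (i : ℕ) (2 + r) = true)
              = (Finset.range (C + 1)).filter (fun r => r < jsel ⟨(i : ℕ), hi⟩) := by
            apply Finset.filter_congr
            intro r hr
            rw [Finset.mem_range] at hr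
            rw [hbit (2 + r) (by omega), hF]
            simp only [dif_pos hi]
            rw [if_neg (by omega), if_neg (by omega)]
            have h4 : 2 + r - 2 = r := by omega
            rw [h4]
            simp
          rw [hcongr, filter_lt_card _ _ (le_of_lt (hjlt ⟨(i : ℕ), hi⟩))]
        have eKi : (K i).1 = xsel ⟨(i : ℕ), hi⟩ := by
          simp only [hK, dif_pos hi]
        rw [slotDef, e0, if_pos rfl, ecard, e1, eKi, hjdec ⟨(i : ℕ), hi⟩,
          List.getElem?_eq_getElem hi]
        simp [List.get_eq_getElem]
      · have e0 : bitAtDef C k1 bits (i : ℕ) 0 = false := by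
          rw [hbit 0 (by omega), hF]
          simp [hi]
        rw [slotDef, e0, if_neg (by simp), List.getElem?_eq_none (by omega)]
    have hred : (List.ofFn (slotDef Q C k1 K bits)).reduceOption = K0 := by
      have hofn : List.ofFn (slotDef Q C k1 K bits)
          = List.ofFn (fun i : Fin k1 => K0[(i : ℕ)]?) :=
        congrArg List.ofFn (funext hslot)
      rw [hofn, reduceOption_ofFn_getElem? K0 k1 hK0len]
    have hψ : psiAux φ H h0 Q C k1 K bits = φ K0 := by
      rw [psiAux, hred, if_pos hφH]
    refine ⟨K, ?_, bits, ?_⟩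
    · intro i
      by_cases hi : (i : ℕ) < K0.length
      · simp only [hK, dif_pos hi]
        exact ⟨hxsel _, trivial⟩
      · simp only [hK, dif_neg hi]
        exact ⟨hx0, trivial⟩
    · intro x hxS
      have hgx : φ K0 x = f x := hagree x (hmemT1 x hxS)
      have hrestr : (fun z : {z : X // z = x ∨ z ∈ Q x} => φ K0 z.1)
          = (fun z : {z : X // z = x ∨ z ∈ Q x} => f z.1) := by
        funext z
        rcases z.2 with hz | hz
        · rw [hz]
          exact hgx
        · exact hagree z.1 (hmemT2 x hxS z.1 hz)
      simp only [hψ]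
      constructor
      · rintro ⟨z, hzU, hzf⟩
        obtain ⟨x', hx'⟩ := (hAtt f hf x).2 ⟨z, hzU, hzf⟩
        have h2 := (hAtt (φ K0) hφH x).1 x' (by rw [hrestr]; exact hx')
        refine ⟨x', h2.2.1, ?_⟩
        rw [← hgx]
        exact h2.2.2
      · rintro ⟨z, hzU, hzg⟩
        have hzg' : φ K0 z ≠ φ K0 x := by
          rw [hgx]
          exact hzg
        obtain ⟨x', hx'⟩ := (hAtt (φ K0) hφH x).2 ⟨z, hzU, hzg'⟩
        have h2 := (hAtt f hf x).1 x' (by rw [← hrestr]; exact hx')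
        exact ⟨x', h2.2.1, h2.2.2⟩


end AdvRobust
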